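/- The NAP operad satisfies the additional commutation property: for any rooted tree t with a vertex s, and rooted trees u, v, one has (t ∘_s u) ∘_{root(u)} v = φ_{uv}((t ∘_s v) ∘_{root(v)} u), where φ_{uv} is the relabelling that exchanges the role of root(u) and root(v). -/
import Mathlib


/-- A labelled rooted tree with vertex set `supp` inside an ambient label type `V`,
given by its root and its parent function (normalized to the identity outside
`supp`, and fixing the root). -/
structure LTree (V : Type) where
  supp : Finset V
  root : V
  parent : V → V

namespace LTree

variable {V : Type} [DecidableEq V]

/-- `t` is an honest rooted tree on its vertex set `t.supp`:  the root is a vertex,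
the parent map fixes the root, sends vertices to vertices, every vertex reaches the
root by iterating the parent map (connectedness/acyclicity), and the parent map is
normalized to the identity outside the vertex set. -/
def IsTree (t : LTree V) : Prop :=
  t.root ∈ t.supp ∧ t.parent t.root = t.root ∧
    (∀ v ∈ t.supp, t.parent v ∈ t.supp ∧ ∃ n, t.parent^[n] v = t.root) ∧
    (∀ v, v ∉ t.supp → t.parent v = v)

/-- The NAP partial composition `u ∘ₛ v`: replace the vertex `s` of `u` by the tree
`v`, reconnecting each edge of `u` arriving at `s` to the root of `v`. -/
def ncomp (u : LTree V) (s : V) (v : LTree V) : LTree V where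
  supp := u.supp.erase s ∪ v.supp
  root := if u.root = s then v.root else u.root
  parent x :=
    if x ∈ u.supp.erase s then (if u.parent x = s then v.root else u.parent x)
    else if x ∈ v.supp then
      (if x = v.root then (if u.parent s = s then v.root else u.parent s) else v.parent x)
    else x

/-- Relabelling a tree along a bijection of the ambient label type. -/
def relabel (e : V ≃ V) (t : LTree V) : LTree V where
  supp := t.supp.image e
  root := e t.root
  parent x := e (t.parent (e.symm x))

/-- The single-vertex tree on the vertex `a`. -/
def eta (a : V) : LTree V := ⟨{a}, a, fun x => x⟩

/-- The edges of `u` arriving at `s`, identified with the children of `s`. -/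
def children (u : LTree V) (s : V) : Finset V :=
  (u.supp.erase s).filter (fun w => u.parent w = s)

/-- The tree `u ∘ₛᶠ v` for `f : In(s,u) → Ver(v)`: replace the vertex `s` of `u` by
the tree `v`, reconnecting each edge `a ∈ In(s,u)` to the vertex `f a` of `v`. -/
def fcomp (u : LTree V) (s : V) (v : LTree V) (f : V → V) : LTree V where
  supp := u.supp.erase s ∪ v.supp
  root := if u.root = s then v.root else u.root
  parent x :=
    if x ∈ u.supp.erase s then (if u.parent x = s then f x else u.parent x)
    else if x ∈ v.supp then
      (if x = v.root then (if u.parent s = s then v.root else u.parent s) else v.parent x)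
    else x

/-- The Pre-Lie partial composition `u ∘ₛ v := Σ_{f : In(s,u) → Ver(v)} u ∘ₛᶠ v`,
a formal linear combination of rooted trees. -/
noncomputable def plcomp (u : LTree V) (s : V) (v : LTree V) : LTree V →₀ ℚ :=
  ∑ f : {w // w ∈ children u s} → {x // x ∈ v.supp},
    Finsupp.single
      (fcomp u s v (fun w => if h : w ∈ children u s then (f ⟨w, h⟩ : V) else v.root)) 1

/-- Bilinear extension of the Pre-Lie partial composition to formal sums. -/
noncomputable def plext (x : LTree V →₀ ℚ) (s : V) (y : LTree V →₀ ℚ) : LTree V →₀ ℚ :=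
  x.sum fun t a => y.sum fun u b => (a * b) • plcomp t s u

end LTree

open LTree in
/-- The additional commutation property of the NAP operad: for a vertex `s` of `t`,
`(t ∘ₛ u) ∘_{root u} v = φ_uv ((t ∘ₛ v) ∘_{root v} u)`, where `φ_uv` is the
relabelling bijection exchanging the root of `u` and the root of `v`. -/
theorem nap_commutation {V : Type} [DecidableEq V] (t u v : LTree V)
    (ht : t.IsTree) (hu : u.IsTree) (hv : v.IsTree)
    (htu : Disjoint t.supp u.supp) (htv : Disjoint t.supp v.supp)
    (huv : Disjoint u.supp v.supp)
    (s : V) (hs : s ∈ t.supp) :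
    ncomp (ncomp t s u) u.root v =
      relabel (Equiv.swap u.root v.root) (ncomp (ncomp t s v) v.root u) := by
  
  classical
  rw [Finset.disjoint_left] at htu htv huv
  obtain ⟨hrt, hprt, htmem, htout⟩ := ht
  obtain ⟨hru, hqru, humem, huout⟩ := hu
  obtain ⟨hrv, hrrv, hvmem, hvout⟩ := hv
  -- basic membership facts
  have hsu : s ∉ u.supp := htu hs
  have hsv : s ∉ v.supp := htv hs
  have hrut : u.root ∉ t.supp := fun h => htu h hru
  have hrvt : v.root ∉ t.supp := fun h => htv h hrv
  have hruv : u.root ∉ v.supp := huv hru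
  have hrvu : v.root ∉ u.supp := fun h => huv h hrv
  have hne : u.root ≠ v.root := fun h => hruv (h ▸ hrv)
  have hsru : s ≠ u.root := fun h => hrut (h ▸ hs)
  have hsrv : s ≠ v.root := fun h => hrvt (h ▸ hs)
  have ext : ∀ a b : LTree V, a.supp = b.supp → a.root = b.root → a.parent = b.parent → a = b := by
    rintro ⟨_,_,_⟩ ⟨_,_,_⟩ rfl rfl rfl; rfl
  apply ext
  · -- supports
    ext x
    rw [show (relabel (Equiv.swap u.root v.root) (ncomp (ncomp t s v) v.root u)).supp
        = (((ncomp t s v).supp.erase v.root) ∪ u.supp).image (Equiv.swap u.root v.root) from rfl,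
      ← Equiv.coe_toEmbedding, ← Finset.map_eq_image, Finset.mem_map_equiv, Equiv.symm_swap]
    simp only [ncomp, Finset.mem_union, Finset.mem_erase]
    rcases eq_or_ne x u.root with rfl | hx1
    · simp [Equiv.swap_apply_left, hrv, hne, hrvu, hruv, hrut]
    rcases eq_or_ne x v.root with rfl | hx2
    · simp [Equiv.swap_apply_right, hru, hne.symm, hrvu, hruv, hrvt, hrv]
    · rw [Equiv.swap_apply_of_ne_of_ne hx1 hx2]
      simp only [ne_eq, hx1, hx2, not_false_eq_true, and_true, true_and]
      tauto
  · -- roots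
    have h1 : t.root ≠ u.root := fun e => hrut (e ▸ hrt)
    have h2 : t.root ≠ v.root := fun e => hrvt (e ▸ hrt)
    simp only [ncomp, relabel]
    by_cases h : t.root = s
    · simp [h, Equiv.swap_apply_left]
    · simp [h, h1, h2, Equiv.swap_apply_of_ne_of_ne h1 h2]
  · -- parents
    funext x
    simp only [ncomp, relabel, Equiv.symm_swap]
    have hpsA : t.parent s ∈ t.supp := (htmem s hs).1
    have hpsu : t.parent s ≠ u.root := fun e => hrut (e ▸ hpsA)
    have hpsv : t.parent s ≠ v.root := fun e => hrvt (e ▸ hpsA)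
    have hσps : Equiv.swap u.root v.root (t.parent s) = t.parent s :=
      Equiv.swap_apply_of_ne_of_ne hpsu hpsv
    rcases eq_or_ne x u.root with rfl | hx1
    · simp [Equiv.swap_apply_left, Equiv.swap_apply_right, Finset.mem_union, Finset.mem_erase,
        hru, hrv, hruv, hrvu, hrut, hrvt, hne, hne.symm, hsru.symm, hsrv.symm, apply_ite
        (Equiv.swap u.root v.root), hσps]
    rcases eq_or_ne x v.root with rfl | hx2
    · simp [Equiv.swap_apply_left, Equiv.swap_apply_right, Finset.mem_union, Finset.mem_erase,
        hru, hrv, hruv, hrvu, hrut, hrvt, hne, hne.symm, hsru.symm, hsrv.symm, apply_ite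
        (Equiv.swap u.root v.root), hσps]
      split_ifs <;> simp_all
    have hσx : Equiv.swap u.root v.root x = x := Equiv.swap_apply_of_ne_of_ne hx1 hx2
    by_cases hxt : x ∈ t.supp
    · have hxu : x ∉ u.supp := htu hxt
      have hxv : x ∉ v.supp := htv hxt
      rcases eq_or_ne x s with rfl | hxs
      · simp [Finset.mem_union, Finset.mem_erase, hxu, hxv, hσx]
      · have hpx : t.parent x ∈ t.supp := (htmem x hxt).1
        have hpxu : t.parent x ≠ u.root := fun e => hrut (e ▸ hpx)
        have hpxv : t.parent x ≠ v.root := fun e => hrvt (e ▸ hpx)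
        simp [Finset.mem_union, Finset.mem_erase, hxt, hxs, hx1, hx2, hxu, hxv, hσx, hpxu, hpxv,
          apply_ite (Equiv.swap u.root v.root), Equiv.swap_apply_left, Equiv.swap_apply_right,
          Equiv.swap_apply_of_ne_of_ne hpxu hpxv]
    · by_cases hxu : x ∈ u.supp
      · have hxv : x ∉ v.supp := huv hxu
        have hqx : u.parent x ∈ u.supp := (humem x hxu).1
        have hqxt : u.parent x ∉ t.supp := fun e => htu e hqx
        have hqxv : u.parent x ≠ v.root := fun e => hrvu (e ▸ hqx)
        simp [Finset.mem_union, Finset.mem_erase, hxt, hxu, hxv, hx1, hx2, hσx, hqxt, hqxv,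
          apply_ite (Equiv.swap u.root v.root), Equiv.swap_apply_left, Equiv.swap_apply_right,
          fun h : u.parent x ≠ u.root => Equiv.swap_apply_of_ne_of_ne h hqxv]
        rcases eq_or_ne (u.parent x) u.root with h | h
        · simp [h, Equiv.swap_apply_left]
        · simp [h, Equiv.swap_apply_of_ne_of_ne h hqxv]
      · by_cases hxv : x ∈ v.supp
        · have hrx : v.parent x ∈ v.supp := (hvmem x hxv).1
          have hrxt : v.parent x ∉ t.supp := fun e => htv e hrx
          have hrxu : v.parent x ≠ u.root := fun e => hruv (e ▸ hrx)
          simp [Finset.mem_union, Finset.mem_erase, hxt, hxu, hxv, hx1, hx2, hσx, hrxt, hrxu,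
            apply_ite (Equiv.swap u.root v.root), Equiv.swap_apply_left, Equiv.swap_apply_right,
            fun h : v.parent x ≠ v.root => Equiv.swap_apply_of_ne_of_ne hrxu h]
          rcases eq_or_ne (v.parent x) v.root with h | h
          · simp [h, Equiv.swap_apply_right]
          · simp [h, Equiv.swap_apply_of_ne_of_ne hrxu h]
        · simp [Finset.mem_union, Finset.mem_erase, hxt, hxu, hxv, hσx]
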